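/- Let t be a binary tree (each node is either a leaf or has exactly two subtrees), and let p be any list of directions (left/right) describing a valid descent from the root of t. Then the number of steps of p at which the descent enters a child subtree c of the current node v satisfying 2 · (number of leaves of c) ≤ (number of leaves of v) is at most log₂(number of leaves of t) (i.e., at most Nat.log 2 (numLeaves t)). In particular, in a heavy-path decomposition of t — where the heavy path through a node continues into the child with at least as many leaf descendants — every root-to-leaf path consists of at most log₂(numLeaves t) + 1 initial segments of heavy paths. -/

import Mathlib

/-- The subtree of a binary tree reached by following a list of directions
(`false` = left, `true` = right); `none` if the descent is invalid. -/
def subtreeAt : Tree Unit → List Bool → Option (Tree Unit)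
  | t, [] => some t
  | BinaryTree.nil, _ :: _ => none
  | BinaryTree.node _ l r, d :: p => subtreeAt (if d then r else l) p

/-- The number of light steps along a descent: steps from a node `v` into a
child `c` with `2 * c.numLeaves ≤ v.numLeaves`. -/
def countLight : Tree Unit → List Bool → ℕ
  | _, [] => 0
  | BinaryTree.nil, _ :: _ => 0
  | BinaryTree.node _ l r, d :: p =>
      (if 2 * (if d then r else l).numLeaves ≤ l.numLeaves + r.numLeaves then 1 else 0)
        + countLight (if d then r else l) p

theorem light_steps_le_log (t : Tree Unit) (p : List Bool)
    (hvalid : (subtreeAt t p).isSome) :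
    countLight t p ≤ Nat.log 2 t.numLeaves := by
  induction p generalizing t with
  | nil => simp [countLight]
  | cons d p ih =>
    cases t with
    | nil => simp [subtreeAt] at hvalid
    | node x l r =>
      have hvalid' : (subtreeAt (if d then r else l) p).isSome := hvalid
      have ihc := ih (if d then r else l) hvalid'
      have hnl : (Tree.node x l r).numLeaves = l.numLeaves + r.numLeaves := rfl
      cases d <;>
      · simp only [if_true, if_false, Bool.false_eq_true, Tree.numLeaves] at ihc ⊢
        first
        | (have hc : 0 < l.numLeaves := l.numLeaves_pos
           show (if 2 * l.numLeaves ≤ l.numLeaves + r.numLeaves then 1 else 0)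
             + countLight l p ≤ Nat.log 2 (Tree.node x l r).numLeaves
           rw [hnl]
           split_ifs with hlight
           · have h1 : Nat.log 2 (l.numLeaves) + 1 = Nat.log 2 (l.numLeaves * 2) :=
               (Nat.log_mul_base (by norm_num) hc.ne').symm
             have h2 : Nat.log 2 (l.numLeaves * 2) ≤ Nat.log 2 (l.numLeaves + r.numLeaves) :=
               Nat.log_mono_right (by omega)
             omega
           · have h2 : Nat.log 2 (l.numLeaves) ≤ Nat.log 2 (l.numLeaves + r.numLeaves) :=
               Nat.log_mono_right (by omega)
             omega)
        | (have hc : 0 < r.numLeaves := r.numLeaves_pos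
           show (if 2 * r.numLeaves ≤ l.numLeaves + r.numLeaves then 1 else 0)
             + countLight r p ≤ Nat.log 2 (Tree.node x l r).numLeaves
           rw [hnl]
           split_ifs with hlight
           · have h1 : Nat.log 2 (r.numLeaves) + 1 = Nat.log 2 (r.numLeaves * 2) :=
               (Nat.log_mul_base (by norm_num) hc.ne').symm
             have h2 : Nat.log 2 (r.numLeaves * 2) ≤ Nat.log 2 (l.numLeaves + r.numLeaves) :=
               Nat.log_mono_right (by omega)
             omega
           · have h2 : Nat.log 2 (r.numLeaves) ≤ Nat.log 2 (l.numLeaves + r.numLeaves) :=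
               Nat.log_mono_right (by omega)
             omega)
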